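/- If p = kq for integers k ≥ 1 and q ≥ 2, then the minimum nonzero value of ν(x^p − y^q) − ν(x^p − y^q + x^a y^b) over monomials x^a y^b strictly below the segment from (p,0) to (0,q) equals q − 1, attained at (a,b) = (p−1, 0). -/

import Mathlib

open MvPolynomial MeasureTheory

/-- The region `Γ₊(f)`: convex closure of the union of translated positive quadrants at the
points of the support of `f` (omitting the origin). -/
noncomputable def gammaPlus (f : MvPolynomial (Fin 2) ℂ) : Set (ℝ × ℝ) :=
  convexHull ℝ (⋃ m ∈ {m ∈ f.support | m ≠ 0},
    {z : ℝ × ℝ | (m 0 : ℝ) ≤ z.1 ∧ (m 1 : ℝ) ≤ z.2})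

/-- The region bounded by the Newton polygon `Γ(f)` and the coordinate axes. -/
noncomputable def newtonRegion (f : MvPolynomial (Fin 2) ℂ) : Set (ℝ × ℝ) :=
  {z : ℝ × ℝ | 0 ≤ z.1 ∧ 0 ≤ z.2} \ gammaPlus f

/-- The Newton number `ν(f) = 2S - a - b + 1` where `S` is the area of the region bounded
by the Newton polygon and the axes and `a`, `b` are the lengths of the intersections of that
region with the `x`- and `y`-axis. -/
noncomputable def newtonNumber (f : MvPolynomial (Fin 2) ℂ) : ℝ :=
  2 * (volume (newtonRegion f)).toReal
    - (volume {x : ℝ | (x, (0:ℝ)) ∈ newtonRegion f}).toReal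
    - (volume {y : ℝ | ((0:ℝ), y) ∈ newtonRegion f}).toReal + 1

section Aux

open Finsupp Set

/-! ### Measure-theoretic helpers -/

lemma meas_band (c d α β : ℝ) :
    MeasurableSet {z : ℝ×ℝ | z.1 ∈ Set.Ico c d ∧ z.2 ∈ Set.Ico 0 (α*z.1+β)} := by
  have : {z : ℝ×ℝ | z.1 ∈ Set.Ico c d ∧ z.2 ∈ Set.Ico 0 (α*z.1+β)}
      = ({z : ℝ×ℝ | c ≤ z.1} ∩ {z | z.1 < d}) ∩ ({z | 0 ≤ z.2} ∩ {z | z.2 < α*z.1+β}) := by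
    ext z; simp [Set.mem_Ico, and_assoc]
  rw [this]
  exact (((measurableSet_le measurable_const measurable_fst).inter
    (measurableSet_lt measurable_fst measurable_const)).inter
    ((measurableSet_le measurable_const measurable_snd).inter
    (measurableSet_lt measurable_snd ((measurable_fst.const_mul α).add_const β))))

lemma vol_under (c d α β : ℝ) (hcd : c ≤ d) (hc : 0 ≤ α*c+β) (hd : 0 ≤ α*d+β) :
    volume {z : ℝ×ℝ | z.1 ∈ Set.Ico c d ∧ z.2 ∈ Set.Ico 0 (α*z.1+β)}
      = ENNReal.ofReal ((d-c)*(α*(c+d)/2+β)) := by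
  rw [Measure.volume_eq_prod, Measure.prod_apply (meas_band c d α β)]
  have hsl : ∀ x : ℝ, (Prod.mk x ⁻¹' {z : ℝ×ℝ | z.1 ∈ Set.Ico c d ∧ z.2 ∈ Set.Ico 0 (α*z.1+β)})
      = if x ∈ Set.Ico c d then Set.Ico 0 (α*x+β) else ∅ := by
    intro x; ext y; by_cases h : x ∈ Set.Ico c d <;> simp only [Set.mem_Ico] at h ⊢ <;>
      simp [h, Set.mem_Ico] <;> tauto
  simp only [hsl]
  have hind : ∀ x : ℝ, volume (if x ∈ Set.Ico c d then Set.Ico 0 (α*x+β) else ∅)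
      = Set.indicator (Set.Ico c d) (fun x => ENNReal.ofReal (α*x+β)) x := by
    intro x; by_cases h : x ∈ Set.Ico c d <;> simp [h, Real.volume_Ico]
  simp only [hind]
  rw [lintegral_indicator measurableSet_Ico]
  have hnn : 0 ≤ᵐ[volume.restrict (Set.Ico c d)] fun x => α*x+β := by
    refine (ae_restrict_iff' measurableSet_Ico).2 (ae_of_all _ fun x hx => ?_)
    simp only [Pi.zero_apply]
    obtain ⟨h1, h2⟩ := hx
    nlinarith [mul_nonneg (sub_nonneg.2 h2.le) hc, mul_nonneg (sub_nonneg.2 h1) hd]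
  have hint : IntegrableOn (fun x : ℝ => α*x+β) (Set.Ico c d) volume := by
    apply IntegrableOn.mono_set _ Set.Ico_subset_Icc_self
    exact Continuous.integrableOn_Icc (by continuity)
  rw [← ofReal_integral_eq_lintegral_ofReal hint hnn]
  congr 1
  have h1 : ∫ x in Set.Ico c d, (α*x+β) = ∫ x in c..d, (α*x+β) := by
    rw [intervalIntegral.integral_of_le hcd, integral_Ioc_eq_integral_Ioo,
      ← integral_Ico_eq_integral_Ioo]
  rw [h1]
  have h2 : ∫ x in c..d, (α*x+β) = α * ((d^2-c^2)/2) + (d-c)*β := by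
    rw [intervalIntegral.integral_add ((intervalIntegral.intervalIntegrable_id).const_mul α)
      (intervalIntegrable_const), intervalIntegral.integral_const_mul, integral_id,
      intervalIntegral.integral_const]
    simp [smul_eq_mul]
  rw [h2]; ring

/-! ### Convex hull helpers -/

lemma convex_halfplane (a b c : ℝ) : Convex ℝ {z : ℝ×ℝ | c ≤ a*z.1+b*z.2} := by
  intro x hx y hy s t hs ht hst
  simp only [Set.mem_setOf_eq] at *
  have h1 := mul_le_mul_of_nonneg_left hx hs
  have h2 := mul_le_mul_of_nonneg_left hy ht
  simp only [Prod.fst_add, Prod.snd_add, Prod.smul_fst, Prod.smul_snd, smul_eq_mul]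
  have hc : s*c + t*c = c := by rw [← add_mul, hst, one_mul]
  nlinarith [h1, h2, hc]

lemma between_quads (x1 y1 x2 y2 : ℝ) (z : ℝ×ℝ) (hxl : x2 ≤ z.1) (hxr : z.1 ≤ x1)
    (hne : x2 < x1)
    (hline : y1*(z.1-x2) + y2*(x1-z.1) ≤ (x1-x2)*z.2) :
    z ∈ convexHull ℝ ({w : ℝ×ℝ | x1 ≤ w.1 ∧ y1 ≤ w.2} ∪ {w : ℝ×ℝ | x2 ≤ w.1 ∧ y2 ≤ w.2}) := by
  set θ : ℝ := (z.1-x2)/(x1-x2) with hθ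
  have hd : (0:ℝ) < x1 - x2 := by linarith
  have hθ0 : 0 ≤ θ := div_nonneg (by linarith) hd.le
  have hθ1 : θ ≤ 1 := by rw [div_le_one hd]; linarith
  set t : ℝ := z.2 - (y1*(z.1-x2) + y2*(x1-z.1))/(x1-x2) with hts
  have ht : 0 ≤ t := by
    rw [hts, sub_nonneg, div_le_iff₀ hd]; linarith
  have hu : ((x1, y1+t) : ℝ×ℝ) ∈ ({w : ℝ×ℝ | x1 ≤ w.1 ∧ y1 ≤ w.2} ∪ {w : ℝ×ℝ | x2 ≤ w.1 ∧ y2 ≤ w.2}) :=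
    Or.inl ⟨le_refl _, by simpa using ht⟩
  have hv : ((x2, y2+t) : ℝ×ℝ) ∈ ({w : ℝ×ℝ | x1 ≤ w.1 ∧ y1 ≤ w.2} ∪ {w : ℝ×ℝ | x2 ≤ w.1 ∧ y2 ≤ w.2}) :=
    Or.inr ⟨le_refl _, by simpa using ht⟩
  have key := (convex_convexHull ℝ _) (subset_convexHull ℝ _ hu) (subset_convexHull ℝ _ hv)
      hθ0 (by linarith : (0:ℝ) ≤ 1 - θ) (by ring)
  have hz : θ • ((x1, y1+t) : ℝ×ℝ) + (1-θ) • ((x2, y2+t) : ℝ×ℝ) = z := by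
    rw [Prod.smul_mk, Prod.smul_mk, Prod.mk_add_mk]
    have hx1 : θ * x1 + (1-θ) * x2 = z.1 := by
      have hθm : θ * (x1 - x2) = z.1 - x2 := div_mul_cancel₀ _ hd.ne'
      linear_combination hθm
    have hx2 : θ * (y1+t) + (1-θ) * (y2+t) = z.2 := by
      have : θ * (y1+t) + (1-θ) * (y2+t) = t + (θ * y1 + (1-θ)*y2) := by ring
      rw [this, hts, hθ]
      field_simp [hd.ne']
      ring
    simp only [smul_eq_mul]
    rw [Prod.ext_iff]
    exact ⟨hx1, hx2⟩
  rwa [hz] at key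

lemma hull2 (P Q : ℝ) (hP : 0 < P) (hQ : 0 < Q) :
    convexHull ℝ ({z : ℝ×ℝ | P ≤ z.1 ∧ 0 ≤ z.2} ∪ {z : ℝ×ℝ | 0 ≤ z.1 ∧ Q ≤ z.2})
    = {z : ℝ×ℝ | 0 ≤ z.1 ∧ 0 ≤ z.2 ∧ P*Q ≤ Q*z.1 + P*z.2} := by
  apply Set.Subset.antisymm
  · apply convexHull_min
    · rintro z (⟨h1, h2⟩ | ⟨h1, h2⟩) <;> refine ⟨by linarith, by linarith, ?_⟩ <;> nlinarith
    · have : {z : ℝ×ℝ | 0 ≤ z.1 ∧ 0 ≤ z.2 ∧ P*Q ≤ Q*z.1 + P*z.2}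
          = {z : ℝ×ℝ | 0 ≤ 1*z.1+0*z.2} ∩ ({z : ℝ×ℝ | 0 ≤ 0*z.1+1*z.2} ∩ {z : ℝ×ℝ | P*Q ≤ Q*z.1 + P*z.2}) := by
        ext z; simp
      rw [this]
      exact (convex_halfplane 1 0 0).inter ((convex_halfplane 0 1 0).inter (convex_halfplane Q P (P*Q)))
  · rintro z ⟨h1, h2, h3⟩
    by_cases hx : P ≤ z.1
    · exact subset_convexHull ℝ _ (Or.inl ⟨hx, h2⟩)
    · push_neg at hx
      exact between_quads P 0 0 Q z h1 hx.le hP (by nlinarith)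

lemma hull3 (P Q A B : ℝ) (hA : 0 < A) (hB : 0 < B) (hP : 0 < P) (hQ : 0 < Q)
    (h : Q*A+P*B < P*Q) :
    convexHull ℝ ({z : ℝ×ℝ | P ≤ z.1 ∧ 0 ≤ z.2} ∪ {z : ℝ×ℝ | 0 ≤ z.1 ∧ Q ≤ z.2}
        ∪ {z : ℝ×ℝ | A ≤ z.1 ∧ B ≤ z.2})
    = {z : ℝ×ℝ | 0 ≤ z.1 ∧ 0 ≤ z.2 ∧ B*P ≤ B*z.1+(P-A)*z.2 ∧ A*Q ≤ (Q-B)*z.1+A*z.2} := by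
  have hAP : A < P := by nlinarith
  have hBQ : B < Q := by nlinarith
  apply Set.Subset.antisymm
  · apply convexHull_min
    · rintro z ((⟨h1, h2⟩ | ⟨h1, h2⟩) | ⟨h1, h2⟩) <;>
        refine ⟨by linarith, by linarith, ?_, ?_⟩ <;> nlinarith
    · have : {z : ℝ×ℝ | 0 ≤ z.1 ∧ 0 ≤ z.2 ∧ B*P ≤ B*z.1+(P-A)*z.2 ∧ A*Q ≤ (Q-B)*z.1+A*z.2}
          = {z : ℝ×ℝ | 0 ≤ 1*z.1+0*z.2} ∩ ({z : ℝ×ℝ | 0 ≤ 0*z.1+1*z.2}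
            ∩ ({z : ℝ×ℝ | B*P ≤ B*z.1+(P-A)*z.2} ∩ {z : ℝ×ℝ | A*Q ≤ (Q-B)*z.1+A*z.2})) := by
        ext z; simp [and_assoc]
      rw [this]
      exact (convex_halfplane 1 0 0).inter ((convex_halfplane 0 1 0).inter
        ((convex_halfplane B (P-A) (B*P)).inter (convex_halfplane (Q-B) A (A*Q))))
  · rintro z ⟨h1, h2, h3, h4⟩
    by_cases hx : P ≤ z.1
    · exact subset_convexHull ℝ _ (Or.inl (Or.inl ⟨hx, h2⟩))
    push_neg at hx
    by_cases hxa : A ≤ z.1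
    · have := between_quads P 0 A B z hxa hx.le hAP (by nlinarith)
      refine convexHull_mono ?_ this
      rintro w (hw | hw)
      · exact Or.inl (Or.inl hw)
      · exact Or.inr hw
    · push_neg at hxa
      have := between_quads A B 0 Q z h1 hxa.le hA (by nlinarith)
      refine convexHull_mono ?_ this
      rintro w (hw | hw)
      · exact Or.inr hw
      · exact Or.inl (Or.inr hw)

/-! ### Support helpers -/

lemma X_mul_pow (A B : ℕ) : (X 0 ^ A * X 1 ^ B : MvPolynomial (Fin 2) ℂ)
    = monomial (single 0 A + single 1 B) 1 := by
  rw [X_pow_eq_monomial, X_pow_eq_monomial, monomial_mul, one_mul]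

lemma single_ne (P Q : ℕ) (hP : P ≠ 0) : (single (0 : Fin 2) P) ≠ single 1 Q := by
  intro h
  have := DFunLike.congr_fun h 0
  simp [single_apply] at this
  exact hP this

lemma supp2 (P Q : ℕ) (hP : P ≠ 0) (hQ : Q ≠ 0) :
    (X 0 ^ P - X 1 ^ Q : MvPolynomial (Fin 2) ℂ).support
      = {single 0 P, single 1 Q} := by
  have hne := single_ne P Q hP
  ext m
  rw [Finset.mem_insert, Finset.mem_singleton, MvPolynomial.mem_support_iff,
    X_pow_eq_monomial, X_pow_eq_monomial, coeff_sub, coeff_monomial, coeff_monomial]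
  split_ifs with h1 h2 h2 <;> simp_all [eq_comm]

lemma supp3 (P Q A B : ℕ) (hP : P ≠ 0) (hQ : Q ≠ 0)
    (h2 : (single 0 A + single 1 B : Fin 2 →₀ ℕ) ≠ single 0 P)
    (h3 : (single 0 A + single 1 B : Fin 2 →₀ ℕ) ≠ single 1 Q) :
    (X 0 ^ P - X 1 ^ Q + X 0 ^ A * X 1 ^ B : MvPolynomial (Fin 2) ℂ).support
      = {single 0 P, single 1 Q, single 0 A + single 1 B} := by
  have hne := single_ne P Q hP
  ext m
  rw [Finset.mem_insert, Finset.mem_insert, Finset.mem_singleton, MvPolynomial.mem_support_iff,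
    X_mul_pow, X_pow_eq_monomial, X_pow_eq_monomial, coeff_add, coeff_sub,
    coeff_monomial, coeff_monomial, coeff_monomial]
  by_cases e1 : (single (0:Fin 2) P : Fin 2 →₀ ℕ) = m
  · by_cases e2 : (single (1:Fin 2) Q : Fin 2 →₀ ℕ) = m
    · exact absurd (e1.trans e2.symm) hne
    · by_cases e3 : (single (0:Fin 2) A + single (1:Fin 2) B : Fin 2 →₀ ℕ) = m
      · exact (h2 (e3.trans e1.symm)).elim
      · rw [if_pos e1, if_neg e2, if_neg e3]
        exact iff_of_true (by norm_num) (Or.inl e1.symm)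
  · by_cases e2 : (single (1:Fin 2) Q : Fin 2 →₀ ℕ) = m
    · by_cases e3 : (single (0:Fin 2) A + single (1:Fin 2) B : Fin 2 →₀ ℕ) = m
      · exact (h3 (e3.trans e2.symm)).elim
      · rw [if_neg e1, if_pos e2, if_neg e3]
        exact iff_of_true (by norm_num) (Or.inr (Or.inl e2.symm))
    · by_cases e3 : (single (0:Fin 2) A + single (1:Fin 2) B : Fin 2 →₀ ℕ) = m
      · rw [if_neg e1, if_neg e2, if_pos e3]
        exact iff_of_true (by norm_num) (Or.inr (Or.inr e3.symm))
      · rw [if_neg e1, if_neg e2, if_neg e3]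
        apply iff_of_false (by norm_num)
        push_neg
        exact ⟨fun h => e1 h.symm, fun h => e2 h.symm, fun h => e3 h.symm⟩

lemma nu_of_hull2 (P Q : ℝ) (hP : 0 < P) (hQ : 0 < Q) (f : MvPolynomial (Fin 2) ℂ)
    (hg : gammaPlus f = {z : ℝ×ℝ | 0 ≤ z.1 ∧ 0 ≤ z.2 ∧ P*Q ≤ Q*z.1 + P*z.2}) :
    newtonNumber f = P*Q - P - Q + 1 := by
  have hNR : newtonRegion f = {z : ℝ×ℝ | 0 ≤ z.1 ∧ 0 ≤ z.2 ∧ Q*z.1 + P*z.2 < P*Q} := by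
    rw [newtonRegion, hg]
    ext z
    simp only [Set.mem_diff, Set.mem_setOf_eq, not_and, not_le]
    constructor
    · rintro ⟨⟨h1, h2⟩, h3⟩
      exact ⟨h1, h2, h3 h1 h2⟩
    · rintro ⟨h1, h2, h3⟩
      exact ⟨⟨h1, h2⟩, fun _ _ => h3⟩
  have key : ∀ x y : ℝ, y < -Q/P*x+Q ↔ Q*x+P*y < P*Q := by
    intro x y
    rw [show -Q/P*x+Q = (P*Q-Q*x)/P by field_simp; ring, lt_div_iff₀ hP]
    constructor <;> intro <;> nlinarith
  have hset : newtonRegion f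
      = {z : ℝ×ℝ | z.1 ∈ Set.Ico 0 P ∧ z.2 ∈ Set.Ico 0 (-Q/P*z.1+Q)} := by
    rw [hNR]; ext z
    simp only [Set.mem_setOf_eq, Set.mem_Ico]
    constructor
    · rintro ⟨h1, h2, h3⟩
      exact ⟨⟨h1, by nlinarith⟩, h2, (key z.1 z.2).2 h3⟩
    · rintro ⟨⟨h1, h1'⟩, h2, h3⟩
      exact ⟨h1, h2, (key z.1 z.2).1 h3⟩
  have hvol : volume (newtonRegion f) = ENNReal.ofReal (P*Q/2) := by
    rw [hset, vol_under 0 P (-Q/P) Q hP.le (by simp; positivity) (by rw [div_mul_cancel₀ _ hP.ne']; linarith)]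
    congr 1
    field_simp
    ring
  have hxs : {x : ℝ | (x, (0:ℝ)) ∈ newtonRegion f} = Set.Ico 0 P := by
    rw [hNR]; ext x
    simp only [Set.mem_setOf_eq, Set.mem_Ico]
    constructor
    · rintro ⟨h1, -, h3⟩; exact ⟨h1, by nlinarith⟩
    · rintro ⟨h1, h2⟩; exact ⟨h1, le_refl _, by nlinarith⟩
  have hys : {y : ℝ | ((0:ℝ), y) ∈ newtonRegion f} = Set.Ico 0 Q := by
    rw [hNR]; ext y
    simp only [Set.mem_setOf_eq, Set.mem_Ico]
    constructor
    · rintro ⟨-, h2, h3⟩; exact ⟨h2, by nlinarith⟩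
    · rintro ⟨h1, h2⟩; exact ⟨le_refl _, h1, by nlinarith⟩
  rw [newtonNumber, hvol, hxs, hys, Real.volume_Ico, Real.volume_Ico,
    ENNReal.toReal_ofReal (by positivity), ENNReal.toReal_ofReal (by linarith),
    ENNReal.toReal_ofReal (by linarith)]
  ring

lemma nu_of_hull3 (P Q A B : ℝ) (hA : 0 < A) (hB : 0 < B) (hP : 0 < P) (hQ : 0 < Q)
    (h : Q*A+P*B < P*Q) (f : MvPolynomial (Fin 2) ℂ)
    (hg : gammaPlus f
      = {z : ℝ×ℝ | 0 ≤ z.1 ∧ 0 ≤ z.2 ∧ B*P ≤ B*z.1+(P-A)*z.2 ∧ A*Q ≤ (Q-B)*z.1+A*z.2}) :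
    newtonNumber f = (A*Q + P*B) - P - Q + 1 := by
  have hAP : A < P := by nlinarith
  have hBQ : B < Q := by nlinarith
  have hPA : (0:ℝ) < P - A := by linarith
  have hNR : newtonRegion f = {z : ℝ×ℝ | 0 ≤ z.1 ∧ 0 ≤ z.2 ∧
      (B*z.1+(P-A)*z.2 < B*P ∨ (Q-B)*z.1+A*z.2 < A*Q)} := by
    rw [newtonRegion, hg]
    ext z
    simp only [Set.mem_diff, Set.mem_setOf_eq, not_and, not_le]
    constructor
    · rintro ⟨⟨h1, h2⟩, h3⟩
      rcases imp_iff_or_not.1 (h3 h1 h2) with h4 | h4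
      · exact ⟨h1, h2, Or.inr h4⟩
      · push_neg at h4
        exact ⟨h1, h2, Or.inl (by linarith)⟩
    · rintro ⟨h1, h2, (h3 | h3)⟩
      · exact ⟨⟨h1, h2⟩, fun _ _ h' => absurd h' (by linarith)⟩
      · exact ⟨⟨h1, h2⟩, fun _ _ h' => by linarith⟩
  have key1 : ∀ x y : ℝ, y < -B/(P-A)*x + B*P/(P-A) ↔ B*x+(P-A)*y < B*P := by
    intro x y
    rw [show -B/(P-A)*x + B*P/(P-A) = (B*P-B*x)/(P-A) by field_simp; ring, lt_div_iff₀ hPA]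
    constructor <;> intro <;> nlinarith
  have key2 : ∀ x y : ℝ, y < (B-Q)/A*x + Q ↔ (Q-B)*x+A*y < A*Q := by
    intro x y
    rw [show (B-Q)/A*x + Q = (A*Q-(Q-B)*x)/A by field_simp; ring, lt_div_iff₀ hA]
    constructor <;> intro <;> nlinarith
  have hsplit : newtonRegion f
      = {z : ℝ×ℝ | z.1 ∈ Set.Ico 0 A ∧ z.2 ∈ Set.Ico 0 ((B-Q)/A*z.1+Q)}
        ∪ {z : ℝ×ℝ | z.1 ∈ Set.Ico A P ∧ z.2 ∈ Set.Ico 0 (-B/(P-A)*z.1 + B*P/(P-A))} := by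
    rw [hNR]
    ext z
    simp only [Set.mem_union, Set.mem_setOf_eq, Set.mem_Ico]
    constructor
    · rintro ⟨h1, h2, hd⟩
      have hxP : z.1 < P := by
        rcases hd with h3 | h3
        · nlinarith [mul_nonneg hPA.le h2]
        · nlinarith
      by_cases hxa : z.1 < A
      · refine Or.inl ⟨⟨h1, hxa⟩, h2, (key2 z.1 z.2).2 ?_⟩
        rcases hd with h3 | h3
        · nlinarith [mul_nonneg (by linarith : (0:ℝ) ≤ A - z.1)
            (by linarith : (0:ℝ) ≤ P*Q - Q*A - P*B)]
        · exact h3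
      · push_neg at hxa
        refine Or.inr ⟨⟨hxa, hxP⟩, h2, (key1 z.1 z.2).2 ?_⟩
        rcases hd with h3 | h3
        · exact h3
        · nlinarith [mul_nonneg (by linarith : (0:ℝ) ≤ z.1 - A)
            (by linarith : (0:ℝ) ≤ P*Q - Q*A - P*B)]
    · rintro (⟨⟨h1, h1'⟩, h2, h3⟩ | ⟨⟨h1, h1'⟩, h2, h3⟩)
      · exact ⟨h1, h2, Or.inr ((key2 z.1 z.2).1 h3)⟩
      · exact ⟨by linarith, h2, Or.inl ((key1 z.1 z.2).1 h3)⟩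
  have hdisj : Disjoint {z : ℝ×ℝ | z.1 ∈ Set.Ico 0 A ∧ z.2 ∈ Set.Ico 0 ((B-Q)/A*z.1+Q)}
      {z : ℝ×ℝ | z.1 ∈ Set.Ico A P ∧ z.2 ∈ Set.Ico 0 (-B/(P-A)*z.1 + B*P/(P-A))} := by
    rw [Set.disjoint_left]
    rintro z ⟨⟨-, h1⟩, -⟩ ⟨⟨h2, -⟩, -⟩
    exact absurd h2 (not_le.2 h1)
  have hv1 : volume {z : ℝ×ℝ | z.1 ∈ Set.Ico 0 A ∧ z.2 ∈ Set.Ico 0 ((B-Q)/A*z.1+Q)}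
      = ENNReal.ofReal (A*(B+Q)/2) := by
    rw [vol_under 0 A ((B-Q)/A) Q hA.le (by simp; linarith)
      (by rw [div_mul_cancel₀ _ hA.ne']; linarith)]
    congr 1
    field_simp
    try ring
    try tauto
  have hv2 : volume {z : ℝ×ℝ | z.1 ∈ Set.Ico A P ∧ z.2 ∈ Set.Ico 0 (-B/(P-A)*z.1 + B*P/(P-A))}
      = ENNReal.ofReal (B*(P-A)/2) := by
    rw [vol_under A P (-B/(P-A)) (B*P/(P-A)) (by linarith)
      (by rw [div_mul_eq_mul_div, ← add_div, le_div_iff₀ hPA]; ring_nf; nlinarith)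
      (by rw [div_mul_eq_mul_div, ← add_div, le_div_iff₀ hPA]; nlinarith)]
    congr 1
    field_simp
    ring
  have hvol : volume (newtonRegion f) = ENNReal.ofReal ((A*Q+P*B)/2) := by
    rw [hsplit, measure_union hdisj (meas_band A P (-B/(P-A)) (B*P/(P-A))), hv1, hv2,
      ← ENNReal.ofReal_add (by nlinarith) (by nlinarith)]
    congr 1
    ring
  have hxs : {x : ℝ | (x, (0:ℝ)) ∈ newtonRegion f} = Set.Ico 0 P := by
    rw [hNR]; ext x
    simp only [Set.mem_setOf_eq, Set.mem_Ico]
    constructor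
    · rintro ⟨h1, -, (h3 | h3)⟩ <;> constructor <;> try exact h1
      · nlinarith
      · nlinarith
    · rintro ⟨h1, h2⟩
      exact ⟨h1, le_refl _, Or.inl (by nlinarith)⟩
  have hys : {y : ℝ | ((0:ℝ), y) ∈ newtonRegion f} = Set.Ico 0 Q := by
    rw [hNR]; ext y
    simp only [Set.mem_setOf_eq, Set.mem_Ico]
    constructor
    · rintro ⟨-, h2, (h3 | h3)⟩ <;> constructor <;> try exact h2
      · nlinarith
      · nlinarith
    · rintro ⟨h1, h2⟩
      exact ⟨le_refl _, h1, Or.inr (by nlinarith)⟩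
  rw [newtonNumber, hvol, hxs, hys, Real.volume_Ico, Real.volume_Ico,
    ENNReal.toReal_ofReal (by nlinarith), ENNReal.toReal_ofReal (by linarith),
    ENNReal.toReal_ofReal (by linarith)]
  ring

lemma mem_quad_single0 (P : ℕ) (z : ℝ×ℝ) :
    ((Finsupp.single (0:Fin 2) P : Fin 2 →₀ ℕ) 0 : ℝ) ≤ z.1 ∧
      ((Finsupp.single (0:Fin 2) P : Fin 2 →₀ ℕ) 1 : ℝ) ≤ z.2 ↔ (P:ℝ) ≤ z.1 ∧ 0 ≤ z.2 := by
  simp [Finsupp.single_apply]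

lemma mem_quad_single1 (Q : ℕ) (z : ℝ×ℝ) :
    ((Finsupp.single (1:Fin 2) Q : Fin 2 →₀ ℕ) 0 : ℝ) ≤ z.1 ∧
      ((Finsupp.single (1:Fin 2) Q : Fin 2 →₀ ℕ) 1 : ℝ) ≤ z.2 ↔ 0 ≤ z.1 ∧ (Q:ℝ) ≤ z.2 := by
  simp [Finsupp.single_apply]

lemma mem_quad_pair (A B : ℕ) (z : ℝ×ℝ) :
    ((Finsupp.single (0:Fin 2) A + Finsupp.single 1 B : Fin 2 →₀ ℕ) 0 : ℝ) ≤ z.1 ∧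
      ((Finsupp.single (0:Fin 2) A + Finsupp.single 1 B : Fin 2 →₀ ℕ) 1 : ℝ) ≤ z.2
      ↔ (A:ℝ) ≤ z.1 ∧ (B:ℝ) ≤ z.2 := by
  simp [Finsupp.add_apply, Finsupp.single_apply]

lemma union2 (f : MvPolynomial (Fin 2) ℂ) (P Q : ℕ) (hP : P ≠ 0) (hQ : Q ≠ 0)
    (hs : ∀ m : Fin 2 →₀ ℕ, m ∈ f.support ∧ m ≠ 0 ↔
      m = Finsupp.single 0 P ∨ m = Finsupp.single 1 Q) :
    gammaPlus f = convexHull ℝ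
      ({z : ℝ×ℝ | (P:ℝ) ≤ z.1 ∧ 0 ≤ z.2} ∪ {z : ℝ×ℝ | 0 ≤ z.1 ∧ (Q:ℝ) ≤ z.2}) := by
  unfold gammaPlus
  congr 1
  ext z
  simp only [Set.mem_iUnion, exists_prop, Set.mem_union, Set.mem_setOf_eq, Finset.mem_filter]
  constructor
  · rintro ⟨m, hm, hz⟩
    rcases (hs m).1 hm with rfl | rfl
    · exact Or.inl ((mem_quad_single0 P z).1 hz)
    · exact Or.inr ((mem_quad_single1 Q z).1 hz)
  · rintro (hz | hz)
    · exact ⟨Finsupp.single 0 P, (hs _).2 (Or.inl rfl), (mem_quad_single0 P z).2 hz⟩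
    · exact ⟨Finsupp.single 1 Q, (hs _).2 (Or.inr rfl), (mem_quad_single1 Q z).2 hz⟩

lemma union3 (f : MvPolynomial (Fin 2) ℂ) (P Q A B : ℕ) (hP : P ≠ 0) (hQ : Q ≠ 0)
    (hs : ∀ m : Fin 2 →₀ ℕ, m ∈ f.support ∧ m ≠ 0 ↔
      m = Finsupp.single 0 P ∨ m = Finsupp.single 1 Q
        ∨ m = Finsupp.single 0 A + Finsupp.single 1 B) :
    gammaPlus f = convexHull ℝ
      ({z : ℝ×ℝ | (P:ℝ) ≤ z.1 ∧ 0 ≤ z.2} ∪ {z : ℝ×ℝ | 0 ≤ z.1 ∧ (Q:ℝ) ≤ z.2}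
        ∪ {z : ℝ×ℝ | (A:ℝ) ≤ z.1 ∧ (B:ℝ) ≤ z.2}) := by
  unfold gammaPlus
  congr 1
  ext z
  simp only [Set.mem_iUnion, exists_prop, Set.mem_union, Set.mem_setOf_eq, Finset.mem_filter]
  constructor
  · rintro ⟨m, hm, hz⟩
    rcases (hs m).1 hm with rfl | rfl | rfl
    · exact Or.inl (Or.inl ((mem_quad_single0 P z).1 hz))
    · exact Or.inl (Or.inr ((mem_quad_single1 Q z).1 hz))
    · exact Or.inr ((mem_quad_pair A B z).1 hz)
  · rintro ((hz | hz) | hz)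
    · exact ⟨Finsupp.single 0 P, (hs _).2 (Or.inl rfl), (mem_quad_single0 P z).2 hz⟩
    · exact ⟨Finsupp.single 1 Q, (hs _).2 (Or.inr (Or.inl rfl)), (mem_quad_single1 Q z).2 hz⟩
    · exact ⟨_, (hs _).2 (Or.inr (Or.inr rfl)), (mem_quad_pair A B z).2 hz⟩

lemma nu2_val (P Q : ℕ) (hP : P ≠ 0) (hQ : Q ≠ 0) :
    newtonNumber (X 0 ^ P - X 1 ^ Q : MvPolynomial (Fin 2) ℂ) = (P:ℝ)*Q - P - Q + 1 := by
  have hP' : (0:ℝ) < P := by exact_mod_cast Nat.pos_of_ne_zero hP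
  have hQ' : (0:ℝ) < Q := by exact_mod_cast Nat.pos_of_ne_zero hQ
  apply nu_of_hull2 _ _ hP' hQ'
  rw [union2 _ P Q hP hQ, hull2 _ _ hP' hQ']
  intro m
  rw [supp2 P Q hP hQ, Finset.mem_insert, Finset.mem_singleton]
  constructor
  · rintro ⟨h | h, -⟩
    · exact Or.inl h
    · exact Or.inr h
  · rintro (rfl | rfl)
    · exact ⟨Or.inl rfl, by simp [Finsupp.single_eq_zero, hP]⟩
    · exact ⟨Or.inr rfl, by simp [Finsupp.single_eq_zero, hQ]⟩

lemma nu3_val (P Q A B : ℕ) (hP : P ≠ 0) (hQ : Q ≠ 0) (hab : Q*A + P*B < P*Q) :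
    newtonNumber (X 0 ^ P - X 1 ^ Q + X 0 ^ A * X 1 ^ B : MvPolynomial (Fin 2) ℂ)
      = if A = 0 ∧ B = 0 then (P:ℝ)*Q - P - Q + 1
        else ((A:ℝ)*Q + (P:ℝ)*B) - (if B = 0 then (A:ℝ) else (P:ℝ))
          - (if A = 0 then (B:ℝ) else (Q:ℝ)) + 1 := by
  have hP' : (0:ℝ) < P := by exact_mod_cast Nat.pos_of_ne_zero hP
  have hQ' : (0:ℝ) < Q := by exact_mod_cast Nat.pos_of_ne_zero hQ
  have hPn := Nat.pos_of_ne_zero hP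
  have hQn := Nat.pos_of_ne_zero hQ
  by_cases hA : A = 0
  · by_cases hB : B = 0
    · -- (0,0): added constant
      subst hA; subst hB
      rw [if_pos (⟨rfl, rfl⟩ : (0:ℕ) = 0 ∧ (0:ℕ) = 0)]
      apply nu_of_hull2 _ _ hP' hQ'
      rw [union2 _ P Q hP hQ, hull2 _ _ hP' hQ']
      intro m
      rw [supp3 P Q 0 0 hP hQ (by simp [Finsupp.single_eq_zero, eq_comm, hP])
          (by simp [Finsupp.single_eq_zero, eq_comm, hQ]),
        Finset.mem_insert, Finset.mem_insert, Finset.mem_singleton]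
      constructor
      · rintro ⟨h | h | h, hm0⟩
        · exact Or.inl h
        · exact Or.inr h
        · exact absurd (by simpa using h) hm0
      · rintro (rfl | rfl)
        · exact ⟨Or.inl rfl, by simp [Finsupp.single_eq_zero, hP]⟩
        · exact ⟨Or.inr (Or.inl rfl), by simp [Finsupp.single_eq_zero, hQ]⟩
    · -- A = 0, B ≥ 1 : vertex (0,B) on y-axis
      subst hA
      have hBn := Nat.pos_of_ne_zero hB
      have hBQ : B < Q := by
        by_contra hc
        push_neg at hc
        have : P*Q ≤ P*B := Nat.mul_le_mul_left P hc
        omega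
      have hB' : (0:ℝ) < B := by exact_mod_cast hBn
      have hBQ' : (B:ℝ) < Q := by exact_mod_cast hBQ
      rw [if_neg (by simp [hB] : ¬((0:ℕ) = 0 ∧ B = 0)), if_neg hB,
        if_pos (rfl : (0:ℕ) = 0)]
      have : newtonNumber (X 0 ^ P - X 1 ^ Q + X 0 ^ 0 * X 1 ^ B : MvPolynomial (Fin 2) ℂ)
          = (P:ℝ)*B - P - B + 1 := by
        apply nu_of_hull2 _ _ hP' hB'
        have hu : gammaPlus (X 0 ^ P - X 1 ^ Q + X 0 ^ 0 * X 1 ^ B : MvPolynomial (Fin 2) ℂ)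
            = convexHull ℝ ({z : ℝ×ℝ | (P:ℝ) ≤ z.1 ∧ 0 ≤ z.2}
              ∪ {z : ℝ×ℝ | 0 ≤ z.1 ∧ (Q:ℝ) ≤ z.2} ∪ {z : ℝ×ℝ | (0:ℝ) ≤ z.1 ∧ (B:ℝ) ≤ z.2}) := by
          have := union3 (X 0 ^ P - X 1 ^ Q + X 0 ^ 0 * X 1 ^ B : MvPolynomial (Fin 2) ℂ)
            P Q 0 B hP hQ ?_
          · simpa using this
          intro m
          rw [supp3 P Q 0 B hP hQ
              (by
                intro hcon
                have := DFunLike.congr_fun hcon 0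
                simp [Finsupp.single_apply] at this
                exact hP this.symm)
              (by
                intro hcon
                have := DFunLike.congr_fun hcon 1
                simp [Finsupp.single_apply] at this
                omega),
            Finset.mem_insert, Finset.mem_insert, Finset.mem_singleton]
          constructor
          · rintro ⟨h | h | h, hm0⟩
            · exact Or.inl h
            · exact Or.inr (Or.inl h)
            · exact Or.inr (Or.inr h)
          · rintro (rfl | rfl | rfl)
            · exact ⟨Or.inl rfl, by simp [Finsupp.single_eq_zero, hP]⟩
            · exact ⟨Or.inr (Or.inl rfl), by simp [Finsupp.single_eq_zero, hQ]⟩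
            · refine ⟨Or.inr (Or.inr rfl), ?_⟩
              intro hcon
              have := DFunLike.congr_fun hcon 1
              simp [Finsupp.single_apply] at this
              exact hB this
        rw [hu]
        have hcollapse : ({z : ℝ×ℝ | (P:ℝ) ≤ z.1 ∧ 0 ≤ z.2}
              ∪ {z : ℝ×ℝ | 0 ≤ z.1 ∧ (Q:ℝ) ≤ z.2} ∪ {z : ℝ×ℝ | (0:ℝ) ≤ z.1 ∧ (B:ℝ) ≤ z.2})
            = ({z : ℝ×ℝ | (P:ℝ) ≤ z.1 ∧ 0 ≤ z.2} ∪ {z : ℝ×ℝ | 0 ≤ z.1 ∧ (B:ℝ) ≤ z.2}) := by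
          ext z
          simp only [Set.mem_union, Set.mem_setOf_eq]
          constructor
          · rintro ((h | ⟨h1, h2⟩) | h)
            · exact Or.inl h
            · exact Or.inr ⟨h1, by linarith⟩
            · exact Or.inr h
          · rintro (h | h)
            · exact Or.inl (Or.inl h)
            · exact Or.inr h
        rw [hcollapse, hull2 _ _ hP' hB']
      rw [this]
      push_cast
      ring
  · by_cases hB : B = 0
    · -- B = 0, A ≥ 1 : vertex (A,0) on x-axis
      subst hB
      have hAn := Nat.pos_of_ne_zero hA
      have hAP : A < P := by
        by_contra hc
        push_neg at hc
        have h1 : Q*P ≤ Q*A := Nat.mul_le_mul_left Q hc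
        have h2 : Q*P = P*Q := Nat.mul_comm Q P
        omega
      have hA' : (0:ℝ) < A := by exact_mod_cast hAn
      have hAP' : (A:ℝ) < P := by exact_mod_cast hAP
      rw [if_neg (by simp [hA] : ¬(A = 0 ∧ (0:ℕ) = 0)), if_pos (rfl : (0:ℕ) = 0),
        if_neg hA]
      have : newtonNumber (X 0 ^ P - X 1 ^ Q + X 0 ^ A * X 1 ^ 0 : MvPolynomial (Fin 2) ℂ)
          = (A:ℝ)*Q - A - Q + 1 := by
        apply nu_of_hull2 _ _ hA' hQ'
        have hu : gammaPlus (X 0 ^ P - X 1 ^ Q + X 0 ^ A * X 1 ^ 0 : MvPolynomial (Fin 2) ℂ)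
            = convexHull ℝ ({z : ℝ×ℝ | (P:ℝ) ≤ z.1 ∧ 0 ≤ z.2}
              ∪ {z : ℝ×ℝ | 0 ≤ z.1 ∧ (Q:ℝ) ≤ z.2} ∪ {z : ℝ×ℝ | (A:ℝ) ≤ z.1 ∧ (0:ℝ) ≤ z.2}) := by
          have := union3 (X 0 ^ P - X 1 ^ Q + X 0 ^ A * X 1 ^ 0 : MvPolynomial (Fin 2) ℂ)
            P Q A 0 hP hQ ?_
          · simpa using this
          intro m
          rw [supp3 P Q A 0 hP hQ
              (by
                intro hcon
                have := DFunLike.congr_fun hcon 0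
                simp [Finsupp.single_apply] at this
                omega)
              (by
                intro hcon
                have := DFunLike.congr_fun hcon 0
                simp [Finsupp.single_apply] at this
                exact hA this),
            Finset.mem_insert, Finset.mem_insert, Finset.mem_singleton]
          constructor
          · rintro ⟨h | h | h, hm0⟩
            · exact Or.inl h
            · exact Or.inr (Or.inl h)
            · exact Or.inr (Or.inr h)
          · rintro (rfl | rfl | rfl)
            · exact ⟨Or.inl rfl, by simp [Finsupp.single_eq_zero, hP]⟩
            · exact ⟨Or.inr (Or.inl rfl), by simp [Finsupp.single_eq_zero, hQ]⟩
            · refine ⟨Or.inr (Or.inr rfl), ?_⟩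
              intro hcon
              have := DFunLike.congr_fun hcon 0
              simp [Finsupp.single_apply] at this
              exact hA this
        rw [hu]
        have hcollapse : ({z : ℝ×ℝ | (P:ℝ) ≤ z.1 ∧ 0 ≤ z.2}
              ∪ {z : ℝ×ℝ | 0 ≤ z.1 ∧ (Q:ℝ) ≤ z.2} ∪ {z : ℝ×ℝ | (A:ℝ) ≤ z.1 ∧ (0:ℝ) ≤ z.2})
            = ({z : ℝ×ℝ | (A:ℝ) ≤ z.1 ∧ 0 ≤ z.2} ∪ {z : ℝ×ℝ | 0 ≤ z.1 ∧ (Q:ℝ) ≤ z.2}) := by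
          ext z
          simp only [Set.mem_union, Set.mem_setOf_eq]
          constructor
          · rintro ((⟨h1, h2⟩ | h) | h)
            · exact Or.inl ⟨by linarith, h2⟩
            · exact Or.inr h
            · exact Or.inl h
          · rintro (h | h)
            · exact Or.inr h
            · exact Or.inl (Or.inr h)
        rw [hcollapse, hull2 _ _ hA' hQ']
      rw [this]
      push_cast
      ring
    · -- interior vertex
      have hAn := Nat.pos_of_ne_zero hA
      have hBn := Nat.pos_of_ne_zero hB
      have hA' : (0:ℝ) < A := by exact_mod_cast hAn
      have hB' : (0:ℝ) < B := by exact_mod_cast hBn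
      have hab' : (Q:ℝ)*A + (P:ℝ)*B < (P:ℝ)*Q := by exact_mod_cast hab
      simp only [if_neg (by tauto : ¬(A = 0 ∧ B = 0)), if_neg hA, if_neg hB]
      rw [nu_of_hull3 P Q A B hA' hB' hP' hQ' hab' _ ?_]
      rw [union3 _ P Q A B hP hQ ?_, hull3 _ _ _ _ hA' hB' hP' hQ' hab']
      intro m
      rw [supp3 P Q A B hP hQ
          (by
            intro hcon
            have h0 := DFunLike.congr_fun hcon 1
            simp [Finsupp.single_apply] at h0
            exact hB h0)
          (by
            intro hcon
            have h0 := DFunLike.congr_fun hcon 0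
            simp [Finsupp.single_apply] at h0
            exact hA h0),
        Finset.mem_insert, Finset.mem_insert, Finset.mem_singleton]
      constructor
      · rintro ⟨h | h | h, hm0⟩
        · exact Or.inl h
        · exact Or.inr (Or.inl h)
        · exact Or.inr (Or.inr h)
      · rintro (rfl | rfl | rfl)
        · exact ⟨Or.inl rfl, by simp [Finsupp.single_eq_zero, hP]⟩
        · exact ⟨Or.inr (Or.inl rfl), by simp [Finsupp.single_eq_zero, hQ]⟩
        · refine ⟨Or.inr (Or.inr rfl), ?_⟩
          intro hcon
          have h0 := DFunLike.congr_fun hcon 0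
          simp [Finsupp.single_apply] at h0
          exact hA h0

end Aux

/-- If `p = kq` with `k ≥ 1`, `q ≥ 2`, the minimum nonzero value of
`ν(x^p - y^q) - ν(x^p - y^q + x^a y^b)` over monomials strictly below the segment from
`(p,0)` to `(0,q)` equals `q - 1`, attained at `(a,b) = (p-1, 0)`. -/
theorem nondeg_jump_q_dvd (p q k : ℕ) (hk : 1 ≤ k) (hq : 2 ≤ q) (hp : p = k * q) :
    newtonNumber ((X 0) ^ p - (X 1) ^ q)
        - newtonNumber ((X 0) ^ p - (X 1) ^ q + (X 0) ^ (p - 1)) = (q : ℝ) - 1 ∧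
    IsLeast {m : ℝ | 0 < m ∧ ∃ a b : ℕ, q * a + p * b < p * q ∧
        m = newtonNumber ((X 0) ^ p - (X 1) ^ q)
              - newtonNumber ((X 0) ^ p - (X 1) ^ q + (X 0) ^ a * (X 1) ^ b)}
      ((q : ℝ) - 1) := by
  have hq0 : q ≠ 0 := by omega
  have hppos : 0 < p := by rw [hp]; exact Nat.mul_pos hk (by omega)
  have hp0 : p ≠ 0 := hppos.ne'
  have hqp : q ≤ p := by
    rw [hp]
    calc q = 1 * q := (one_mul q).symm
    _ ≤ k * q := Nat.mul_le_mul_right q hk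
  have hp2 : 2 ≤ p := le_trans hq hqp
  have hq2R : (2:ℝ) ≤ q := by exact_mod_cast hq
  have hqpR : (q:ℝ) ≤ p := by exact_mod_cast hqp
  have hcomm : q * p = p * q := Nat.mul_comm q p
  have hpm1 : q * (p-1) + p * 0 < p * q := by
    have h1 : q * (p-1) < q * p := by
      have h2 : p - 1 < p := by omega
      exact Nat.mul_lt_mul_of_le_of_lt (le_refl q) h2 (by omega)
    omega
  have hjump : newtonNumber ((X 0) ^ p - (X 1) ^ q)
      - newtonNumber ((X 0) ^ p - (X 1) ^ q + (X 0) ^ (p-1) * (X 1) ^ 0 : MvPolynomial (Fin 2) ℂ)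
      = (q:ℝ) - 1 := by
    rw [nu2_val p q hp0 hq0, nu3_val p q (p-1) 0 hp0 hq0 hpm1,
      if_neg (by omega : ¬((p-1 = 0) ∧ (0:ℕ) = 0)), if_pos (rfl : (0:ℕ) = 0),
      if_neg (by omega : ¬(p-1 = 0))]
    have hc : ((p-1 : ℕ) : ℝ) = (p:ℝ) - 1 := by
      have : (1:ℕ) ≤ p := by omega
      push_cast [this]
      ring
    rw [hc]
    push_cast
    ring
  constructor
  · rw [show ((X 0) ^ p - (X 1) ^ q + (X 0) ^ (p-1) : MvPolynomial (Fin 2) ℂ)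
      = (X 0) ^ p - (X 1) ^ q + (X 0) ^ (p-1) * (X 1) ^ 0 by rw [pow_zero, mul_one]]
    exact hjump
  constructor
  · exact ⟨by linarith, p-1, 0, hpm1, hjump.symm⟩
  · rintro m ⟨hm, a, b, hab, rfl⟩
    rw [nu2_val p q hp0 hq0, nu3_val p q a b hp0 hq0 hab] at hm ⊢
    by_cases h00 : a = 0 ∧ b = 0
    · rw [if_pos h00] at hm
      linarith
    · rw [if_neg h00] at hm ⊢
      by_cases hb : b = 0
      · have ha : a ≠ 0 := fun h => h00 ⟨h, hb⟩
        subst hb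
        rw [if_pos rfl, if_neg ha] at hm ⊢
        push_cast at hm ⊢
        have haP : a < p := by
          have h1 : q * a < q * p := by omega
          exact Nat.lt_of_mul_lt_mul_left h1
        have haPR : (a:ℝ) + 1 ≤ p := by exact_mod_cast haP
        have haR : (0:ℝ) ≤ a := Nat.cast_nonneg a
        nlinarith [mul_nonneg (by linarith : (0:ℝ) ≤ (p:ℝ) - a - 1) (by linarith : (0:ℝ) ≤ (q:ℝ) - 1)]
      · by_cases ha : a = 0
        · subst ha
          rw [if_neg hb, if_pos rfl] at hm ⊢
          push_cast at hm ⊢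
          have hbQ : b < q := by
            have h1 : p * b < p * q := by omega
            exact Nat.lt_of_mul_lt_mul_left h1
          have hbQR : (b:ℝ) + 1 ≤ q := by exact_mod_cast hbQ
          have hbR : (0:ℝ) ≤ b := Nat.cast_nonneg b
          nlinarith [mul_nonneg (by linarith : (0:ℝ) ≤ (q:ℝ) - b - 1) (by linarith : (0:ℝ) ≤ (p:ℝ) - 1)]
        · rw [if_neg hb, if_neg ha] at hm ⊢
          have hm' : (0:ℝ) < (p:ℝ)*q - (a:ℝ)*q - (p:ℝ)*b := by linarith
          have hkey : ((p:ℝ)*q - (a:ℝ)*q - (p:ℝ)*b)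
              = (q:ℝ) * (((k*q : ℤ) - a - k*b : ℤ) : ℝ) := by
            push_cast
            rw [hp]
            push_cast
            ring
          have hqR : (0:ℝ) < q := by linarith
          have hcpos : (0:ℝ) < (((k*q : ℤ) - a - k*b : ℤ) : ℝ) := by
            by_contra hc
            push_neg at hc
            nlinarith [hm', hkey]
          have hc1 : (1:ℤ) ≤ (k*q : ℤ) - a - k*b := by
            have : (0:ℤ) < (k*q : ℤ) - a - k*b := by exact_mod_cast hcpos
            omega
          have hc1R : (1:ℝ) ≤ (((k*q : ℤ) - a - k*b : ℤ) : ℝ) := by exact_mod_cast hc1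
          nlinarith [mul_le_mul_of_nonneg_left hc1R hqR.le, hkey]
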